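/- Let T > 0, μ > 0 and C ≥ 0. Let X, D, Ω : [0,T] → ℝ be nonnegative functions such that X is continuous and D, Ω are Lebesgue integrable on [0,T]. Assume that for every t ∈ [0,T] one has X(t) + μ·∫₀ᵗ D(τ) dτ ≤ X(0) + ∫₀ᵗ (Ω(τ)·X(τ) + C·X(τ)·D(τ)) dτ. If, in addition, 2·C·X(0)·exp(∫₀ᵀ Ω(τ) dτ) < μ, then for every t ∈ [0,T] one has X(t) + (μ/2)·∫₀ᵗ D(τ) dτ ≤ X(0)·exp(∫₀ᵗ Ω(τ) dτ). -/

import Mathlib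

open MeasureTheory intervalIntegral Set Topology Filter

/-- Integral form of Gronwall's inequality. -/
private lemma gronwall_aux (b c : ℝ) (hb : 0 ≤ b) (hc : 0 ≤ c) (Y W : ℝ → ℝ)
    (hYc : ContinuousOn Y (Icc 0 b)) (hYnn : ∀ t ∈ Icc (0:ℝ) b, 0 ≤ Y t)
    (hWnn : ∀ t ∈ Icc (0:ℝ) b, 0 ≤ W t) (hWint : IntervalIntegrable W volume 0 b)
    (h : ∀ t ∈ Icc (0:ℝ) b, Y t ≤ c + ∫ s in (0:ℝ)..t, W s * Y s) :
    ∀ t ∈ Icc (0:ℝ) b, Y t ≤ c * Real.exp (∫ s in (0:ℝ)..t, W s) := by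
  have hIcc : uIcc (0:ℝ) b = Icc 0 b := uIcc_of_le hb
  have hWY : IntervalIntegrable (fun s => W s * Y s) volume 0 b :=
    hWint.mul_continuousOn (by rwa [hIcc])
  have hmono : ∀ {s t : ℝ}, 0 ≤ s → s ≤ t → t ≤ b → uIcc s t ⊆ uIcc (0:ℝ) b := by
    intro s t hs hst htb
    rw [uIcc_of_le hst, hIcc]
    exact Icc_subset_Icc hs htb
  have hsplit : ∀ {f : ℝ → ℝ}, IntervalIntegrable f volume 0 b →
      ∀ {s t : ℝ}, 0 ≤ s → s ≤ t → t ≤ b →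
      (∫ τ in (0:ℝ)..t, f τ) = (∫ τ in (0:ℝ)..s, f τ) + ∫ τ in s..t, f τ := by
    intro f hf s t hs hst htb
    exact (integral_add_adjacent_intervals (hf.mono_set (hmono le_rfl hs (hst.trans htb)))
      (hf.mono_set (hmono hs hst htb))).symm
  set A : ℝ → ℝ := fun t => ∫ s in (0:ℝ)..t, W s with hA
  set E : ℝ → ℝ := fun t => c + ∫ s in (0:ℝ)..t, W s * Y s with hE
  have hYE : ∀ t ∈ Icc (0:ℝ) b, Y t ≤ E t := h
  have hAcont : ContinuousOn A (Icc 0 b) := by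
    rw [← hIcc]; exact continuousOn_primitive_interval' hWint left_mem_uIcc
  have hEcont : ContinuousOn E (Icc 0 b) := by
    rw [← hIcc]
    exact continuousOn_const.add (continuousOn_primitive_interval' hWY left_mem_uIcc)
  have hEmono : ∀ {s t : ℝ}, 0 ≤ s → s ≤ t → t ≤ b → E s ≤ E t := by
    intro s t hs hst htb
    have h1 := hsplit hWY hs hst htb
    have h2 : 0 ≤ ∫ τ in s..t, W τ * Y τ :=
      intervalIntegral.integral_nonneg hst (fun u hu =>
        mul_nonneg (hWnn u ⟨hs.trans hu.1, hu.2.trans htb⟩)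
          (hYnn u ⟨hs.trans hu.1, hu.2.trans htb⟩))
    simp only [hE]
    linarith
  have hE0 : E 0 = c := by simp [hE]
  have hEnn : ∀ t ∈ Icc (0:ℝ) b, 0 ≤ E t := fun t ht =>
    hc.trans (hE0 ▸ hEmono le_rfl ht.1 ht.2)
  have key : ∀ ε : ℝ, 0 < ε → ∀ t ∈ Icc (0:ℝ) b,
      E t ≤ (c + ε) * Real.exp ((1 + ε) * A t) := by
    intro ε hε
    set sε : Set ℝ := {t | E t ≤ (c + ε) * Real.exp ((1 + ε) * A t)} with hsε
    have hcont2 : ContinuousOn (fun t => (E t, (c + ε) * Real.exp ((1 + ε) * A t)))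
        (Icc 0 b) :=
      hEcont.prodMk (continuousOn_const.mul (Real.continuous_exp.comp_continuousOn
        (continuousOn_const.mul hAcont)))
    have hclosed : IsClosed (sε ∩ Icc 0 b) := by
      have heq : sε ∩ Icc 0 b = Icc (0:ℝ) b ∩
          (fun t => (E t, (c + ε) * Real.exp ((1 + ε) * A t))) ⁻¹' {p : ℝ × ℝ | p.1 ≤ p.2} := by
        ext x; simp [hsε, and_comm]
      rw [heq]
      exact hcont2.preimage_isClosed_of_isClosed isClosed_Icc isClosed_le_prod
    have h0 : (0:ℝ) ∈ sε := by
      have hA0 : A 0 = 0 := by simp [hA]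
      simp only [hsε, mem_setOf_eq, hE0, hA0, mul_zero, Real.exp_zero, mul_one]
      linarith
    have hstep : ∀ t ∈ sε ∩ Ico (0:ℝ) b, ∀ v ∈ Ioi t, (sε ∩ Ioc t v).Nonempty := by
      rintro t ⟨hts, ht0, htb⟩ v hv
      set δ : ℝ := min (1/2) (ε / (1 + ε)) with hδ
      have hδpos : 0 < δ := lt_min (by norm_num) (div_pos hε (by linarith))
      have hm : t < min v b := lt_min hv htb
      -- find u slightly to the right of t with small increment of A
      have hctA : ContinuousWithinAt A (Icc 0 b) t := hAcont t ⟨ht0, htb.le⟩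
      have hIoc : Ioc t (min v b) ∈ 𝓝[>] t := Ioc_mem_nhdsGT_of_mem ⟨le_rfl, hm⟩
      have hle' : 𝓝[>] t ≤ 𝓝[Icc (0:ℝ) b] t :=
        nhdsWithin_le_of_mem (Filter.mem_of_superset hIoc
          (fun x hx => ⟨ht0.trans hx.1.le, hx.2.trans (min_le_right _ _)⟩))
      have hev : ∀ᶠ u in 𝓝[>] t, A u - A t < δ := by
        have h2 : ∀ᶠ u in 𝓝[Icc (0:ℝ) b] t, A u < A t + δ :=
          hctA (Iio_mem_nhds (by linarith))
        exact (h2.filter_mono hle').mono (fun x hx => by linarith)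
      have hIoc' : ∀ᶠ u in 𝓝[>] t, u ∈ Ioc t (min v b) := hIoc
      obtain ⟨u, hu1, hu2⟩ := (hev.and hIoc').exists
      have htu : t ≤ u := hu2.1.le
      have hub : u ≤ b := hu2.2.trans (min_le_right _ _)
      have hu0 : 0 ≤ u := ht0.trans htu
      have hΔdef : A u = A t + ∫ τ in t..u, W τ := hsplit hWint ht0 htu hub
      set Δ : ℝ := ∫ τ in t..u, W τ with hΔw
      have hΔnn : 0 ≤ Δ := intervalIntegral.integral_nonneg htu
        (fun x hx => hWnn x ⟨ht0.trans hx.1, hx.2.trans hub⟩)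
      have hΔδ : Δ < δ := by rw [hΔdef] at hu1; linarith
      have hΔhalf : Δ ≤ 1/2 := hΔδ.le.trans (min_le_left _ _)
      have hΔε : Δ * (1 + ε) ≤ ε := by
        have h2 : Δ ≤ ε / (1 + ε) := hΔδ.le.trans (min_le_right _ _)
        rw [← le_div_iff₀ (by linarith : (0:ℝ) < 1 + ε)]
        exact h2
      have hEu : E u = E t + ∫ τ in t..u, W τ * Y τ := by
        simp only [hE]
        rw [hsplit hWY ht0 htu hub]
        ring
      have hIY : (∫ τ in t..u, W τ * Y τ) ≤ Δ * E u := by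
        have hb1 : IntervalIntegrable (fun τ => W τ * Y τ) volume t u :=
          hWY.mono_set (hmono ht0 htu hub)
        have hb2 : IntervalIntegrable (fun τ => W τ * E u) volume t u :=
          (hWint.mono_set (hmono ht0 htu hub)).mul_const _
        have hmle := intervalIntegral.integral_mono_on htu hb1 hb2 (fun x hx => by
          have hx' : x ∈ Icc (0:ℝ) b := ⟨ht0.trans hx.1, hx.2.trans hub⟩
          exact mul_le_mul_of_nonneg_left
            ((hYE x hx').trans (hEmono hx'.1 hx.2 hub)) (hWnn x hx'))
        calc (∫ τ in t..u, W τ * Y τ) ≤ ∫ τ in t..u, W τ * E u := hmle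
          _ = Δ * E u := by rw [intervalIntegral.integral_mul_const]
      have hEule : E u * (1 - Δ) ≤ E t := by nlinarith [hEu, hIY]
      have hexp1 := Real.add_one_le_exp ((1 + ε) * Δ)
      have hQ : (1:ℝ) ≤ (1 - Δ) * Real.exp ((1 + ε) * Δ) := by
        nlinarith [mul_le_mul_of_nonneg_right hΔε hΔnn,
          mul_nonneg (by linarith : (0:ℝ) ≤ 1 - Δ)
            (by linarith : (0:ℝ) ≤ Real.exp ((1 + ε) * Δ) - (1 + (1 + ε) * Δ))]
      have hEunn : 0 ≤ E u := hEnn u ⟨hu0, hub⟩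
      have hQpos : (0:ℝ) < Real.exp ((1 + ε) * Δ) := Real.exp_pos _
      have humem : u ∈ sε := by
        show E u ≤ (c + ε) * Real.exp ((1 + ε) * A u)
        have hEx : Real.exp ((1 + ε) * A u)
            = Real.exp ((1 + ε) * A t) * Real.exp ((1 + ε) * Δ) := by
          rw [hΔdef, mul_add, Real.exp_add]
        rw [hEx]
        calc E u = E u * 1 := (mul_one _).symm
          _ ≤ E u * ((1 - Δ) * Real.exp ((1 + ε) * Δ)) :=
              mul_le_mul_of_nonneg_left hQ hEunn
          _ = (E u * (1 - Δ)) * Real.exp ((1 + ε) * Δ) := by ring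
          _ ≤ E t * Real.exp ((1 + ε) * Δ) :=
              mul_le_mul_of_nonneg_right hEule hQpos.le
          _ ≤ ((c + ε) * Real.exp ((1 + ε) * A t)) * Real.exp ((1 + ε) * Δ) :=
              mul_le_mul_of_nonneg_right hts hQpos.le
          _ = (c + ε) * (Real.exp ((1 + ε) * A t) * Real.exp ((1 + ε) * Δ)) := by ring
      exact ⟨u, humem, hu2.1, hu2.2.trans (min_le_left _ _)⟩
    exact fun t ht => hclosed.Icc_subset_of_forall_exists_gt h0 hstep ht
  intro t ht
  have hYEt := hYE t ht
  have hlim : Filter.Tendsto (fun ε : ℝ => (c + ε) * Real.exp ((1 + ε) * A t))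
      (𝓝[>] (0:ℝ)) (𝓝 (c * Real.exp (A t))) := by
    have hcont : Continuous fun ε : ℝ => (c + ε) * Real.exp ((1 + ε) * A t) :=
      (continuous_const.add continuous_id).mul (Real.continuous_exp.comp
        ((continuous_const.add continuous_id).mul continuous_const))
    have h2 := hcont.tendsto 0
    simp only [add_zero, one_mul] at h2
    exact h2.mono_left nhdsWithin_le_nhds
  have hev : ∀ᶠ ε in 𝓝[>] (0:ℝ), Y t ≤ (c + ε) * Real.exp ((1 + ε) * A t) := by
    filter_upwards [self_mem_nhdsWithin] with ε hε
    exact hYEt.trans (key ε hε t ht)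
  exact ge_of_tendsto hlim hev

/-- **Bootstrap (Gronwall-type) lemma.**  Let `T > 0`, `μ > 0`, `C ≥ 0` and let
`X, D, Ω : [0,T] → ℝ` be nonnegative with `X` continuous and `D, Ω` integrable on `[0,T]`.
If for every `t ∈ [0,T]`,
`X t + μ ∫₀ᵗ D ≤ X 0 + ∫₀ᵗ (Ω τ * X τ + C * X τ * D τ) dτ` and
`2 C X(0) exp(∫₀ᵀ Ω) < μ`, then for every `t ∈ [0,T]`,
`X t + (μ/2) ∫₀ᵗ D ≤ X 0 * exp (∫₀ᵗ Ω)`. -/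
theorem bootstrap_gronwall (T μ C : ℝ) (hT : 0 < T) (hμ : 0 < μ) (hC : 0 ≤ C)
    (X D Ω : ℝ → ℝ)
    (hXnn : ∀ t ∈ Set.Icc (0:ℝ) T, 0 ≤ X t)
    (hDnn : ∀ t ∈ Set.Icc (0:ℝ) T, 0 ≤ D t)
    (hΩnn : ∀ t ∈ Set.Icc (0:ℝ) T, 0 ≤ Ω t)
    (hXcont : ContinuousOn X (Set.Icc (0:ℝ) T))
    (hDint : IntervalIntegrable D volume 0 T)
    (hΩint : IntervalIntegrable Ω volume 0 T)
    (hineq : ∀ t ∈ Set.Icc (0:ℝ) T,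
      X t + μ * ∫ τ in (0:ℝ)..t, D τ ≤
        X 0 + ∫ τ in (0:ℝ)..t, (Ω τ * X τ + C * X τ * D τ))
    (hsmall : 2 * C * X 0 * Real.exp (∫ τ in (0:ℝ)..T, Ω τ) < μ) :
    ∀ t ∈ Set.Icc (0:ℝ) T,
      X t + (μ / 2) * ∫ τ in (0:ℝ)..t, D τ ≤
        X 0 * Real.exp (∫ τ in (0:ℝ)..t, Ω τ) := by
  have hT0 : (0:ℝ) ≤ T := hT.le
  have hIccT : uIcc (0:ℝ) T = Icc 0 T := uIcc_of_le hT0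
  have hmono : ∀ {s t : ℝ}, 0 ≤ s → s ≤ t → t ≤ T → uIcc s t ⊆ uIcc (0:ℝ) T := by
    intro s t hs hst htb
    rw [uIcc_of_le hst, hIccT]
    exact Icc_subset_Icc hs htb
  have hX0 : 0 ≤ X 0 := hXnn 0 ⟨le_rfl, hT0⟩
  have hΩX : IntervalIntegrable (fun τ => Ω τ * X τ) volume 0 T :=
    hΩint.mul_continuousOn (by rwa [hIccT])
  have hCXD : IntervalIntegrable (fun τ => C * X τ * D τ) volume 0 T :=
    hDint.continuousOn_mul (by rw [hIccT]; exact continuousOn_const.mul hXcont)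
  have hAmono : ∀ {s t : ℝ}, 0 ≤ s → s ≤ t → t ≤ T →
      (∫ τ in (0:ℝ)..s, Ω τ) ≤ ∫ τ in (0:ℝ)..t, Ω τ := by
    intro s t hs hst htT
    have h1 := intervalIntegral.integral_add_adjacent_intervals
      (hΩint.mono_set (hmono le_rfl hs (hst.trans htT))) (hΩint.mono_set (hmono hs hst htT))
    have h2 : 0 ≤ ∫ τ in s..t, Ω τ := intervalIntegral.integral_nonneg hst
      (fun x hx => hΩnn x ⟨hs.trans hx.1, hx.2.trans htT⟩)
    linarith
  have hITnn : 0 ≤ ∫ τ in (0:ℝ)..T, Ω τ :=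
    intervalIntegral.integral_nonneg hT0 (fun x hx => hΩnn x hx)
  have hexpT : (1:ℝ) ≤ Real.exp (∫ τ in (0:ℝ)..T, Ω τ) := Real.one_le_exp hITnn
  have hCsm : C * X 0 * Real.exp (∫ τ in (0:ℝ)..T, Ω τ) < μ / 2 := by linarith
  have hYc : ContinuousOn (fun s => X s + μ / 2 * ∫ τ in (0:ℝ)..s, D τ) (Icc 0 T) := by
    apply hXcont.add (continuousOn_const.mul ?_)
    rw [← hIccT]
    exact continuousOn_primitive_interval' hDint left_mem_uIcc
  have hDprim_nn : ∀ s ∈ Icc (0:ℝ) T, 0 ≤ ∫ τ in (0:ℝ)..s, D τ := fun s hs =>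
    intervalIntegral.integral_nonneg hs.1 (fun x hx => hDnn x ⟨hx.1, hx.2.trans hs.2⟩)
  -- key lemma: if `C * X ≤ μ/2` on `[0, t)`, then the conclusion holds on `[0, t]`
  have good : ∀ t ∈ Icc (0:ℝ) T, (∀ s ∈ Ico (0:ℝ) t, C * X s ≤ μ / 2) →
      ∀ s ∈ Icc (0:ℝ) t,
        X s + μ / 2 * ∫ τ in (0:ℝ)..s, D τ ≤ X 0 * Real.exp (∫ τ in (0:ℝ)..s, Ω τ) := by
    intro t ht hP
    apply gronwall_aux t (X 0) ht.1 hX0 (fun s => X s + μ / 2 * ∫ τ in (0:ℝ)..s, D τ) Ω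
      (hYc.mono (Icc_subset_Icc le_rfl ht.2))
      (fun s hs => add_nonneg (hXnn s ⟨hs.1, hs.2.trans ht.2⟩)
        (mul_nonneg (by linarith) (hDprim_nn s ⟨hs.1, hs.2.trans ht.2⟩)))
      (fun s hs => hΩnn s ⟨hs.1, hs.2.trans ht.2⟩)
      (hΩint.mono_set (hmono le_rfl ht.1 ht.2))
    intro s hs
    have hsT : s ∈ Icc (0:ℝ) T := ⟨hs.1, hs.2.trans ht.2⟩
    have h1 := hineq s hsT
    have hΩXs : IntervalIntegrable (fun τ => Ω τ * X τ) volume 0 s :=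
      hΩX.mono_set (hmono le_rfl hs.1 hsT.2)
    have hCXDs : IntervalIntegrable (fun τ => C * X τ * D τ) volume 0 s :=
      hCXD.mono_set (hmono le_rfl hs.1 hsT.2)
    have hDs : IntervalIntegrable D volume 0 s := hDint.mono_set (hmono le_rfl hs.1 hsT.2)
    rw [intervalIntegral.integral_add hΩXs hCXDs] at h1
    have hCXD_le : (∫ τ in (0:ℝ)..s, C * X τ * D τ) ≤ ∫ τ in (0:ℝ)..s, μ / 2 * D τ := by
      apply intervalIntegral.integral_mono_ae_restrict hs.1 hCXDs (hDs.const_mul _)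
      have hmem : ∀ᵐ τ ∂(volume.restrict (Icc (0:ℝ) s)), τ ∈ Icc (0:ℝ) s :=
        ae_restrict_mem measurableSet_Icc
      have hne : ∀ᵐ τ ∂(volume.restrict (Icc (0:ℝ) s)), τ ≠ t := by
        refine ae_restrict_of_ae ?_
        rw [ae_iff]
        have heq : {x : ℝ | ¬ x ≠ t} = {t} := by ext x; simp
        rw [heq]
        exact Real.volume_singleton
      filter_upwards [hmem, hne] with τ hτ hneq
      have hτt : τ < t := lt_of_le_of_ne (hτ.2.trans hs.2) hneq
      have hCXτ := hP τ ⟨hτ.1, hτt⟩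
      have hDτ : 0 ≤ D τ := hDnn τ ⟨hτ.1, hτ.2.trans hsT.2⟩
      nlinarith
    rw [intervalIntegral.integral_const_mul] at hCXD_le
    have hΩYs : IntervalIntegrable
        (fun τ => Ω τ * (X τ + μ / 2 * ∫ σ in (0:ℝ)..τ, D σ)) volume 0 s := by
      apply (hΩint.mono_set (hmono le_rfl hs.1 hsT.2)).mul_continuousOn
      rw [uIcc_of_le hs.1]
      exact hYc.mono (Icc_subset_Icc le_rfl hsT.2)
    have hΩX_le : (∫ τ in (0:ℝ)..s, Ω τ * X τ) ≤
        ∫ τ in (0:ℝ)..s, Ω τ * (X τ + μ / 2 * ∫ σ in (0:ℝ)..τ, D σ) := by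
      apply intervalIntegral.integral_mono_on hs.1 hΩXs hΩYs
      intro x hx
      have hx' : x ∈ Icc (0:ℝ) T := ⟨hx.1, hx.2.trans hsT.2⟩
      have h2 := hDprim_nn x hx'
      have h3 := hΩnn x hx'
      have h4 : 0 ≤ Ω x * (μ / 2 * ∫ τ in (0:ℝ)..x, D τ) :=
        mul_nonneg h3 (mul_nonneg (by linarith) h2)
      nlinarith [h4]
    show X s + μ / 2 * (∫ τ in (0:ℝ)..s, D τ) ≤
      X 0 + ∫ τ in (0:ℝ)..s, Ω τ * (X τ + μ / 2 * ∫ σ in (0:ℝ)..τ, D σ)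
    linarith
  -- continuation (sSup) argument
  set S : Set ℝ := {t | t ∈ Icc (0:ℝ) T ∧ ∀ s ∈ Ico (0:ℝ) t, C * X s ≤ μ / 2} with hS
  have h0S : (0:ℝ) ∈ S :=
    ⟨left_mem_Icc.2 hT0, fun s hs => absurd hs.2 (not_lt.2 hs.1)⟩
  have hSbdd : BddAbove S := ⟨T, fun x hx => hx.1.2⟩
  have hSne : S.Nonempty := ⟨0, h0S⟩
  set t₀ : ℝ := sSup S with ht₀def
  have ht₀Icc : t₀ ∈ Icc (0:ℝ) T :=
    ⟨le_csSup hSbdd h0S, csSup_le hSne fun x hx => hx.1.2⟩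
  have hPt₀ : ∀ s ∈ Ico (0:ℝ) t₀, C * X s ≤ μ / 2 := by
    intro s hs
    obtain ⟨x, hxS, hsx⟩ := exists_lt_of_lt_csSup hSne hs.2
    exact hxS.2 s ⟨hs.1, hsx⟩
  have hstrict : ∀ s ∈ Icc (0:ℝ) t₀, C * X s < μ / 2 := by
    intro s hs
    have hgood := good t₀ ht₀Icc hPt₀ s hs
    have hsT : s ∈ Icc (0:ℝ) T := ⟨hs.1, hs.2.trans ht₀Icc.2⟩
    have h1 : X s ≤ X 0 * Real.exp (∫ τ in (0:ℝ)..s, Ω τ) := by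
      have h2 := hDprim_nn s hsT
      nlinarith
    have h2 : Real.exp (∫ τ in (0:ℝ)..s, Ω τ) ≤ Real.exp (∫ τ in (0:ℝ)..T, Ω τ) :=
      Real.exp_le_exp.2 (hAmono hs.1 hsT.2 le_rfl)
    have h3 : C * X s ≤ C * X 0 * Real.exp (∫ τ in (0:ℝ)..T, Ω τ) := by
      have h4 : C * X s ≤ C * (X 0 * Real.exp (∫ τ in (0:ℝ)..s, Ω τ)) :=
        mul_le_mul_of_nonneg_left h1 hC
      have h5 : X 0 * Real.exp (∫ τ in (0:ℝ)..s, Ω τ) ≤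
          X 0 * Real.exp (∫ τ in (0:ℝ)..T, Ω τ) :=
        mul_le_mul_of_nonneg_left h2 hX0
      calc C * X s ≤ C * (X 0 * Real.exp (∫ τ in (0:ℝ)..s, Ω τ)) := h4
        _ ≤ C * (X 0 * Real.exp (∫ τ in (0:ℝ)..T, Ω τ)) := mul_le_mul_of_nonneg_left h5 hC
        _ = C * X 0 * Real.exp (∫ τ in (0:ℝ)..T, Ω τ) := by ring
    linarith
  have ht₀T : t₀ = T := by
    by_contra hne
    have hlt : t₀ < T := lt_of_le_of_ne ht₀Icc.2 hne
    have hcX : ContinuousWithinAt (fun r => C * X r) (Icc (0:ℝ) T) t₀ :=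
      (continuousOn_const.mul hXcont) t₀ ht₀Icc
    have hev : {r : ℝ | C * X r < μ / 2} ∈ 𝓝[Icc (0:ℝ) T] t₀ :=
      hcX (Iio_mem_nhds (hstrict t₀ ⟨ht₀Icc.1, le_rfl⟩))
    obtain ⟨δ, hδpos, hδball⟩ := Metric.mem_nhdsWithin_iff.1 hev
    set t₁ : ℝ := min (t₀ + δ / 2) T with ht₁def
    have ht₀t₁ : t₀ < t₁ := lt_min (by linarith) hlt
    have ht₁S : t₁ ∈ S := by
      refine ⟨⟨ht₀Icc.1.trans ht₀t₁.le, min_le_right _ _⟩, ?_⟩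
      intro s hs
      rcases le_or_gt s t₀ with h | h
      · exact (hstrict s ⟨hs.1, h⟩).le
      · have hst₁ : s < t₁ := hs.2
        have hsT : s ∈ Icc (0:ℝ) T := ⟨hs.1, hst₁.le.trans (min_le_right _ _)⟩
        have hsball : s ∈ Metric.ball t₀ δ := by
          rw [Real.ball_eq_Ioo]
          constructor
          · linarith
          · have : s < t₀ + δ / 2 := lt_of_lt_of_le hst₁ (min_le_left _ _)
            linarith
        exact (hδball ⟨hsball, hsT⟩).le
    have hcon := le_csSup hSbdd ht₁S
    exact absurd hcon (not_le.2 ht₀t₁)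
  intro t ht
  have hPT : ∀ s ∈ Ico (0:ℝ) T, C * X s ≤ μ / 2 := ht₀T ▸ hPt₀
  exact good T (right_mem_Icc.2 hT0) hPT t ht
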